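/- Let A = uuᵀ with u ∈ ℝⁿ nonzero, and let i* be an index maximizing |u_i|. Then H := (1/u_{i*}²) e_{i*} e_{i*}ᵀ satisfies AHA = A, HAH = H, H = Hᵀ, and for every symmetric matrix G with AGA = A one has ‖H‖₁ ≤ ‖G‖₁, where ‖·‖₁ denotes the entrywise 1-norm. -/

import Mathlib

open Matrix

theorem rank_one_symmetric_min_norm {n : ℕ}
    (u : Fin n → ℝ) (hu : u ≠ 0)
    (istar : Fin n) (hmax : ∀ i, |u i| ≤ |u istar|)
    (A H : Matrix (Fin n) (Fin n) ℝ)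
    (hA : A = vecMulVec u u)
    (hH : H = (1 / (u istar) ^ 2) • vecMulVec (Pi.single istar 1) (Pi.single istar 1)) :
    A * H * A = A ∧ H * A * H = H ∧ Hᵀ = H ∧
      ∀ G : Matrix (Fin n) (Fin n) ℝ, Gᵀ = G → A * G * A = A →
        ∑ i, ∑ j, |H i j| ≤ ∑ i, ∑ j, |G i j| := by
  have hc : u istar ≠ 0 := by
    intro h
    apply hu
    funext i
    have h1 := hmax i
    rw [h, abs_zero] at h1
    exact abs_eq_zero.mp (le_antisymm h1 (abs_nonneg _))
  have hc2 : (u istar) ^ 2 ≠ 0 := pow_ne_zero _ hc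
  subst hA hH
  refine ⟨?_, ?_, ?_, ?_⟩
  · ext i j
    simp [mul_apply, vecMulVec_apply, Pi.single_apply, Finset.mul_sum,
      Finset.sum_mul]
    field_simp
  · ext i j
    simp [mul_apply, vecMulVec_apply, Pi.single_apply, Finset.mul_sum,
      Finset.sum_mul]
    split_ifs <;> (field_simp; try ring)
  · ext i j
    simp only [transpose_apply, Matrix.smul_apply, vecMulVec_apply, Pi.single_apply,
      smul_eq_mul]
    split_ifs <;> ring
  · intro G hG hAGA
    have hthis := congrFun (congrFun hAGA istar) istar
    simp only [mul_apply, vecMulVec_apply] at hthis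
    have h3 : ∑ x, (∑ x1, u istar * u x1 * G x1 x) * (u x * u istar)
        = (u istar * u istar) * ∑ k, ∑ l, u k * G k l * u l := by
      rw [Finset.sum_comm (f := fun k l => u k * G k l * u l), Finset.mul_sum]
      refine Finset.sum_congr rfl fun x _ => ?_
      rw [Finset.sum_mul, Finset.mul_sum]
      refine Finset.sum_congr rfl fun x1 _ => ?_
      ring
    rw [h3] at hthis
    have hS : ∑ k, ∑ l, u k * G k l * u l = 1 := by
      have hne : u istar * u istar ≠ 0 := mul_ne_zero hc hc
      field_simp at hthis
      exact hthis
    have hHsum : ∑ i, ∑ j, |((1 / (u istar) ^ 2) •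
        vecMulVec (Pi.single istar (1:ℝ)) (Pi.single istar 1)) i j|
        = 1 / (u istar) ^ 2 := by
      rw [Finset.sum_eq_single istar]
      · rw [Finset.sum_eq_single istar]
        · simp only [Matrix.smul_apply, vecMulVec_apply, Pi.single_eq_same, mul_one,
            smul_eq_mul]
          rw [abs_of_nonneg (by positivity)]
        · intro b _ hb
          simp [vecMulVec_apply, Pi.single_eq_of_ne hb]
        · simp
      · intro b _ hb
        simp [vecMulVec_apply, Pi.single_eq_of_ne hb]
      · simp
    rw [hHsum]
    have key : 1 ≤ (u istar)^2 * ∑ i, ∑ j, |G i j| := by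
      calc 1 = |∑ k, ∑ l, u k * G k l * u l| := by rw [hS]; simp
        _ ≤ ∑ k, ∑ l, |u k * G k l * u l| := by
            refine (Finset.abs_sum_le_sum_abs _ _).trans ?_
            exact Finset.sum_le_sum fun k _ => Finset.abs_sum_le_sum_abs _ _
        _ ≤ ∑ k, ∑ l, (u istar)^2 * |G k l| := by
            refine Finset.sum_le_sum fun k _ => Finset.sum_le_sum fun l _ => ?_
            rw [abs_mul, abs_mul, sq]
            calc |u k| * |G k l| * |u l| ≤ |u istar| * |G k l| * |u istar| :=
                  mul_le_mul (mul_le_mul (hmax k) le_rfl (abs_nonneg _)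
                    (abs_nonneg _)) (hmax l) (abs_nonneg _) (mul_nonneg (abs_nonneg _) (abs_nonneg _))
              _ = |u istar| * |u istar| * |G k l| := by ring
              _ = u istar * u istar * |G k l| := by rw [abs_mul_abs_self]
        _ = (u istar)^2 * ∑ i, ∑ j, |G i j| := by
            rw [Finset.mul_sum]
            exact Finset.sum_congr rfl fun k _ => (Finset.mul_sum _ _ _).symm
    rw [div_le_iff₀ (by positivity)]
    linarith [key]
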